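/- Let Q₃(M) = 2μ|sym M|² + κ (tr M)² for 3×3 matrices M, with μ > 0 and κ > 0. For every 2×2 matrix G, the minimum over b ∈ ℝ² and a ∈ ℝ of Q₃ applied to the 3×3 matrix with upper-left block G, last column (b, a), and zero in the remaining entries of the last row, equals Q₂(G) := 2μ(|sym G|² + γ (tr G)²), where γ = κ/(2μ + κ). The minimum is attained at b = 0 and a = -γ tr G. -/
import Mathlib


open Matrix

/-- Squared Frobenius norm. -/
def frobSq {m : Type*} [Fintype m] (M : Matrix m m ℝ) : ℝ := ∑ i, ∑ j, (M i j) ^ 2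

/-- Symmetric part of a matrix. -/
noncomputable def symPart {m : Type*} [Fintype m] (M : Matrix m m ℝ) : Matrix m m ℝ :=
  (1 / 2 : ℝ) • (M + Mᵀ)

/-- `Q₃(M) = 2μ|sym M|² + κ (tr M)²`. -/
noncomputable def Q3 (μ κ : ℝ) (M : Matrix (Fin 2 ⊕ Fin 1) (Fin 2 ⊕ Fin 1) ℝ) : ℝ :=
  2 * μ * frobSq (symPart M) + κ * (Matrix.trace M) ^ 2

/-- `Q₂(G) = 2μ(|sym G|² + γ (tr G)²)`. -/
noncomputable def Q2 (μ γ : ℝ) (G : Matrix (Fin 2) (Fin 2) ℝ) : ℝ :=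
  2 * μ * (frobSq (symPart G) + γ * (Matrix.trace G) ^ 2)

theorem Q2_relaxation (μ κ : ℝ) (hμ : 0 < μ) (hκ : 0 < κ)
    (G : Matrix (Fin 2) (Fin 2) ℝ) :
    (∀ (b : Fin 2 → ℝ) (a : ℝ),
      Q2 μ (κ / (2 * μ + κ)) G ≤
        Q3 μ κ (fromBlocks G (Matrix.of fun i _ => b i) 0 (Matrix.of fun _ _ => a))) ∧
    Q3 μ κ (fromBlocks G 0 0
        (Matrix.of fun _ _ => -(κ / (2 * μ + κ)) * Matrix.trace G)) =
      Q2 μ (κ / (2 * μ + κ)) G := by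
  have h : 0 < 2 * μ + κ := by linarith
  have hγ : κ / (2 * μ + κ) * (2 * μ + κ) = κ := div_mul_cancel₀ κ h.ne'
  set γ := κ / (2 * μ + κ) with hγdef
  clear_value γ
  constructor
  · intro b a
    have e2 : 2 * μ * γ * (G 0 0 + G 1 1) ^ 2 * (2 * μ + κ) =
        2 * μ * κ * (G 0 0 + G 1 1) ^ 2 := by
      linear_combination (2 * μ * (G 0 0 + G 1 1) ^ 2) * hγ
    have key : 2 * μ * γ * (G 0 0 + G 1 1) ^ 2 ≤
        2 * μ * a ^ 2 + κ * (G 0 0 + G 1 1 + a) ^ 2 := by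
      nlinarith [sq_nonneg (2 * μ * a + κ * (G 0 0 + G 1 1 + a)), e2, h]
    simp only [Q2, Q3, frobSq, symPart, trace, diag, Fintype.sum_sum_type, Fin.sum_univ_two,
      Fin.sum_univ_one, fromBlocks_apply₁₁, fromBlocks_apply₁₂, fromBlocks_apply₂₁,
      fromBlocks_apply₂₂, transpose_apply, Matrix.add_apply, Matrix.smul_apply, of_apply,
      Matrix.zero_apply, smul_eq_mul]
    nlinarith [mul_nonneg hμ.le (sq_nonneg (b 0)), mul_nonneg hμ.le (sq_nonneg (b 1)), key]
  · simp only [Q2, Q3, frobSq, symPart, trace, diag, Fintype.sum_sum_type, Fin.sum_univ_two,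
      Fin.sum_univ_one, fromBlocks_apply₁₁, fromBlocks_apply₁₂, fromBlocks_apply₂₁,
      fromBlocks_apply₂₂, transpose_apply, Matrix.add_apply, Matrix.smul_apply, of_apply,
      Matrix.zero_apply, smul_eq_mul]
    linear_combination ((G 0 0 + G 1 1) ^ 2 * (γ - 1)) * hγ
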